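/- arXiv:math/0608125 — 2 statements merged into one kernel-verified Lean document; each statement's English description precedes it below -/
import Mathlib

section
/- Let S be a grope frame, m < n, and A, B ∈ W(E_n) non-empty reduced words such that ABA⁻B⁻ ≠ e in F_n and both AB and A⁻B⁻ are reduced words. Then: (1.1) if B ≡ B₀A, then B₀ is non-empty, AB₀ and A⁻B₀⁻ are reduced words, AB₀A⁻B₀⁻ = ABA⁻B⁻ in F_n, and if in addition AB₀, A⁻B₀⁻ ∈ F_m then AB, A⁻B⁻ ∈ F_m; (1.2) if A ≡ A₀B, then A₀ is non-empty, A₀B and A₀⁻B⁻ are reduced words, A₀BA₀⁻B⁻ = ABA⁻B⁻ in F_n, and if in addition A₀B, A₀⁻B⁻ ∈ F_m then AB, A⁻B⁻ ∈ F_m; (1.3) if A ≡ A₀Z and B ≡ B₀Z for non-empty words A₀, B₀ and B₀A₀⁻ is reduced, then A₀ZB₀A₀⁻Z⁻B₀⁻ is reduced, A₀ZB₀A₀⁻Z⁻B₀⁻ = ABA⁻B⁻ in F_n, and if in addition A₀, B₀, Z ∈ F_m then AB, A⁻B⁻ ∈ F_m. -/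
/-! Basic definitions for grope groups, following Cencelj–Eda–Vavpetič,
"Rigidity of the minimal grope group". -/

/-- A *grope frame* is a set `S` of finite sequences of natural numbers containing the
empty sequence and such that for every `s ∈ S` there is `n > 0` with
`{i | s ++ [i] ∈ S} = {0, …, 2n - 1}`. -/
structure GropeFrame where
  S : Set (List ℕ)
  nil_mem : [] ∈ S
  branch : ∀ s ∈ S, ∃ n : ℕ, 0 < n ∧ {i : ℕ | s ++ [i] ∈ S} = Set.Iio (2 * n)

namespace GropeFrame

/-- The number of children of a sequence `s` in the frame. -/
noncomputable def deg (G : GropeFrame) (s : List ℕ) : ℕ :=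
  sInf {i : ℕ | s ++ [i] ∉ G.S}

theorem deg_eq (G : GropeFrame) {s : List ℕ} {n : ℕ}
    (hn : {i : ℕ | s ++ [i] ∈ G.S} = Set.Iio (2 * n)) : G.deg s = 2 * n := by
  have hc : {i : ℕ | s ++ [i] ∉ G.S} = Set.Ici (2 * n) := by
    ext i
    have h := Set.ext_iff.1 hn i
    simp only [Set.mem_setOf_eq, Set.mem_Iio] at h
    simp [Set.mem_Ici, h, not_lt]
  rw [deg, hc, csInf_Ici]

theorem mem_of_lt_deg (G : GropeFrame) {s : List ℕ} (hs : s ∈ G.S) {i : ℕ}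
    (hi : i < G.deg s) : s ++ [i] ∈ G.S := by
  obtain ⟨n, -, hn⟩ := G.branch s hs
  rw [G.deg_eq hn] at hi
  exact (Set.ext_iff.1 hn i).2 hi

/-- `s` is binary branched in the frame `G` if its set of children indices is `{0, 1}`. -/
def BinaryBranched (G : GropeFrame) (s : List ℕ) : Prop :=
  {i : ℕ | s ++ [i] ∈ G.S} = {0, 1}

end GropeFrame

/-- The set `E_m` of free generators `c_s`, `s ∈ S`, `lh s = m`, of the free group `F_m`. -/
abbrev GropeGen (G : GropeFrame) (m : ℕ) : Type :=
  {s : List ℕ // s ∈ G.S ∧ s.length = m}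

/-- The generator `c_{s i}` obtained by appending `i` to `s`. -/
def gropeChild {G : GropeFrame} {m : ℕ} (x : GropeGen G m) (i : ℕ)
    (hi : i < G.deg x.1) : GropeGen G (m + 1) :=
  ⟨x.1 ++ [i], ⟨G.mem_of_lt_deg x.2.1 hi, by simp [x.2.2]⟩⟩

open scoped commutatorElement

/-- The bonding homomorphism `e_m : F_m → F_{m+1}`, sending `c_s` to
`[c_{s0}, c_{s1}] ⋯ [c_{s(2k-2)}, c_{s(2k-1)}]`. -/
noncomputable def gropeE (G : GropeFrame) (m : ℕ) :
    FreeGroup (GropeGen G m) →* FreeGroup (GropeGen G (m + 1)) :=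
  FreeGroup.lift fun x =>
    (List.ofFn fun j : Fin (G.deg x.1 / 2) =>
      ⁅FreeGroup.of (gropeChild x (2 * (j : ℕ)) (by have := j.isLt; omega)),
        FreeGroup.of (gropeChild x (2 * (j : ℕ) + 1) (by have := j.isLt; omega))⁆).prod

/-- The composite `e_{m,n} = e_{n-1} ∘ ⋯ ∘ e_m : F_m → F_n`. -/
noncomputable def gropeEle (G : GropeFrame) {m n : ℕ} (h : m ≤ n)
    (x : FreeGroup (GropeGen G m)) : FreeGroup (GropeGen G n) :=
  Nat.leRecOn (C := fun k => FreeGroup (GropeGen G k)) h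
    (fun {k} y => gropeE G k y) x

/-- For `v ∈ F_n`, `MemF G m v` says that `v` lies in (the image of) `F_m`,
i.e. in the image of `e_{m,n}`. -/
def MemF (G : GropeFrame) (m : ℕ) {n : ℕ} (v : FreeGroup (GropeGen G n)) : Prop :=
  ∃ (h : m ≤ n) (x : FreeGroup (GropeGen G m)), gropeEle G h x = v

/-- The formal inverse `W⁻` of a word. -/
def wordInv {α : Type*} (w : List (α × Bool)) : List (α × Bool) :=
  (w.map fun p => (p.1, !p.2)).reverse

/-- A word is reduced if no letter is adjacent to its formal inverse. -/
def IsReducedWord {α : Type*} (w : List (α × Bool)) : Prop :=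
  w.Chain' fun a b => ¬(a.1 = b.1 ∧ b.2 = !a.2)

/-- A word is cyclically reduced if it is reduced and moreover its first and last letters
are not mutually inverse. -/
def IsCyclicallyReducedWord {α : Type*} (w : List (α × Bool)) : Prop :=
  IsReducedWord w ∧ ∀ a b : α × Bool, w.getLast? = some a → w.head? = some b →
    ¬(a.1 = b.1 ∧ b.2 = !a.2)

/-- Expansion of a single letter: `c_t` is replaced by
`c_{t0} c_{t1} c_{t0}⁻ c_{t1}⁻ ⋯ c_{t(2k-2)} c_{t(2k-1)} c_{t(2k-2)}⁻ c_{t(2k-1)}⁻` and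
`c_t⁻` by the formal inverse of this word. -/
noncomputable def letterExp (G : GropeFrame) {m : ℕ} (a : GropeGen G m × Bool) :
    List (GropeGen G (m + 1) × Bool) :=
  let P : List (GropeGen G (m + 1) × Bool) :=
    (List.ofFn fun j : Fin (G.deg a.1.1 / 2) =>
      [(gropeChild a.1 (2 * (j : ℕ)) (by have := j.isLt; omega), true),
       (gropeChild a.1 (2 * (j : ℕ) + 1) (by have := j.isLt; omega), true),
       (gropeChild a.1 (2 * (j : ℕ)) (by have := j.isLt; omega), false),
       (gropeChild a.1 (2 * (j : ℕ) + 1) (by have := j.isLt; omega), false)]).flatten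
  if a.2 then P else wordInv P

/-- The word `e_{m,n}[W]` obtained from `W ∈ W(E_m)` by iterated letter expansion. -/
noncomputable def wordExp (G : GropeFrame) {m n : ℕ} (h : m ≤ n)
    (w : List (GropeGen G m × Bool)) : List (GropeGen G n × Bool) :=
  Nat.leRecOn (C := fun k => List (GropeGen G k × Bool)) h
    (fun {k} v => (v.map (letterExp G)).flatten) w

/-- `IsSmall G hmn W V` : the subword `V` of the reduced word `W ∈ W(E_n)` (where
`W ∈ F_m`, with `W ≡ e_{m,n}[W₀]`) is *small*, i.e. there are a letter `c` occurring in
`W₀` and `i ∈ ℕ` such that `V` is a subword of `e_{m+1,n}[c_{si}]` (resp. of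
`e_{m+1,n}[c_{si}⁻]` when the occurring letter is negative). -/
def IsSmall (G : GropeFrame) {m n : ℕ} (hmn : m < n)
    (W V : List (GropeGen G n × Bool)) : Prop :=
  ∃ W₀ : List (GropeGen G m × Bool), wordExp G hmn.le W₀ = W ∧
    ∃ c ∈ W₀, ∃ (i : ℕ) (hi : i < G.deg c.1.1),
      V <:+: wordExp G (Nat.succ_le_of_lt hmn) [(gropeChild c.1 i hi, c.2)]

section WordAux

open List

variable {α : Type*}

local notation "Wd" => List (α × Bool)

theorem wordInv_append (x y : Wd) : wordInv (x ++ y) = wordInv y ++ wordInv x := by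
  simp [wordInv]

@[simp] theorem wordInv_wordInv (x : Wd) : wordInv (wordInv x) = x := by
  simp [wordInv, Function.comp_def]

@[simp] theorem wordInv_nil : wordInv ([] : Wd) = [] := rfl

@[simp] theorem wordInv_eq_nil_iff {x : Wd} : wordInv x = [] ↔ x = [] := by
  simp [wordInv]

theorem wordInv_eq_invRev (x : Wd) : wordInv x = FreeGroup.invRev x := rfl

theorem mk_wordInv (x : Wd) : FreeGroup.mk (wordInv x) = (FreeGroup.mk x)⁻¹ := by
  rw [wordInv_eq_invRev, FreeGroup.inv_mk]

theorem mk_append (x y : Wd) : FreeGroup.mk (x ++ y) = FreeGroup.mk x * FreeGroup.mk y :=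
  (FreeGroup.mul_mk).symm

theorem IsReducedWord.infix {w v : Wd} (h : IsReducedWord w) (hv : v <:+: w) :
    IsReducedWord v := List.IsChain.infix h hv

theorem IsReducedWord.wordInv {w : Wd} (h : IsReducedWord w) : IsReducedWord (wordInv w) := by
  unfold IsReducedWord at h ⊢
  unfold _root_.wordInv
  change List.IsChain _ _ at h ⊢
  rw [List.isChain_reverse, List.isChain_map]
  refine h.imp ?_
  rintro ⟨a1, a2⟩ ⟨b1, b2⟩ hab ⟨h1, h2⟩
  exact hab ⟨h1.symm, by revert h2; cases a2 <;> cases b2 <;> simp⟩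

theorem isReducedWord_wordInv_iff {w : Wd} : IsReducedWord (wordInv w) ↔ IsReducedWord w :=
  ⟨fun h => by simpa using h.wordInv, fun h => h.wordInv⟩

theorem IsReducedWord.reduce_eq {w : Wd} [DecidableEq α] (h : IsReducedWord w) :
    FreeGroup.reduce w = w := by
  induction w with
  | nil => rfl
  | cons a t ih =>
    have ht : FreeGroup.reduce t = t := ih h.tail
    rw [FreeGroup.reduce.cons, ht]
    cases t with
    | nil => rfl
    | cons b t' =>
      have hab : ¬(a.1 = b.1 ∧ b.2 = !a.2) := (List.isChain_cons_cons.1 h).1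
      have : ¬(a.1 = b.1 ∧ a.2 = !b.2) := by
        intro ⟨h1, h2⟩; exact hab ⟨h1, by revert h2; cases a.2 <;> cases b.2 <;> simp⟩
      simp [this]

theorem IsReducedWord.eq_of_mk_eq {w v : Wd} (hw : IsReducedWord w) (hv : IsReducedWord v)
    (h : FreeGroup.mk w = FreeGroup.mk v) : w = v := by
  classical
  have := FreeGroup.reduce.sound h
  rwa [hw.reduce_eq, hv.reduce_eq] at this

theorem isReducedWord_toWord (x : FreeGroup α) [DecidableEq α] : IsReducedWord x.toWord := by
  rcases x with ⟨L⟩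
  rw [show Quot.mk _ L = FreeGroup.mk L from rfl, FreeGroup.toWord_mk]
  induction L with
  | nil => constructor
  | cons a t ih =>
    rw [FreeGroup.reduce.cons]
    rcases h : FreeGroup.reduce t with _ | ⟨b, t'⟩
    · constructor
    · rw [h] at ih
      by_cases hc : a.1 = b.1 ∧ a.2 = !b.2
      · simp only [hc, if_true, and_self]
        exact ih.tail
      · simp only [hc, if_false]
        refine List.isChain_cons_cons.2 ⟨?_, ih⟩
        intro ⟨h1, h2⟩; exact hc ⟨h1, by revert h2; cases a.2 <;> cases b.2 <;> simp⟩

theorem reduced_glue {X Y W : Wd} (h1 : IsReducedWord (X ++ Y)) (h2 : IsReducedWord (Y ++ W))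
    (hY : Y ≠ []) : IsReducedWord (X ++ (Y ++ W)) := by
  unfold IsReducedWord at *
  change List.IsChain _ _ at h1 h2 ⊢
  rw [List.isChain_append] at h1 ⊢
  refine ⟨h1.1, h2, ?_⟩
  intro x hx y hy
  refine h1.2.2 x hx y ?_
  rwa [List.head?_append_of_ne_nil _ hY] at hy

end WordAux
section GropeAux

open List

variable {G : GropeFrame} {m : ℕ}

/-- half degree -/
noncomputable def hdeg (G : GropeFrame) {m : ℕ} (x : GropeGen G m) : ℕ := G.deg x.1 / 2

theorem hdeg_pos (x : GropeGen G m) : 0 < hdeg G x ∧ G.deg x.1 = 2 * hdeg G x := by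
  obtain ⟨k, hk, hset⟩ := G.branch x.1 x.2.1
  have hd := G.deg_eq hset
  constructor <;> · unfold hdeg; omega

/-- arbitrary generator at each level -/
noncomputable def someGen (G : GropeFrame) : ∀ m : ℕ, GropeGen G m
  | 0 => ⟨[], G.nil_mem, rfl⟩
  | m + 1 => gropeChild (someGen G m) 0 (by have := hdeg_pos (someGen G m); omega)

/-- total child function -/
noncomputable def child' (x : GropeGen G m) (i : ℕ) : GropeGen G (m + 1) :=
  if h : i < G.deg x.1 then gropeChild x i h else someGen G (m + 1)

theorem child'_inj {x y : GropeGen G m} {i j : ℕ} (hi : i < G.deg x.1) (hj : j < G.deg y.1)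
    (h : child' x i = child' y j) : x = y ∧ i = j := by
  rw [child', dif_pos hi, child', dif_pos hj] at h
  have h1 : x.1 ++ [i] = y.1 ++ [j] := congrArg Subtype.val h
  have hlen : x.1.length = y.1.length := by rw [x.2.2, y.2.2]
  obtain ⟨h2, h3⟩ := List.append_inj h1 hlen
  exact ⟨Subtype.ext h2, by simpa using h3⟩

/-- quadruple -/
def quad (y z : GropeGen G (m + 1)) : List (GropeGen G (m + 1) × Bool) :=
  [(y, true), (z, true), (y, false), (z, false)]

/-- first index of the `j`-th quadruple -/
noncomputable def qY (a : GropeGen G m × Bool) (j : ℕ) : ℕ :=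
  if a.2 then 2 * j else G.deg a.1.1 - (2 * j + 1)

/-- second index of the `j`-th quadruple -/
noncomputable def qZ (a : GropeGen G m × Bool) (j : ℕ) : ℕ :=
  if a.2 then 2 * j + 1 else G.deg a.1.1 - (2 * j + 2)

/-- the canonical block list of a letter -/
noncomputable def blocks (a : GropeGen G m × Bool) : List (List (GropeGen G (m + 1) × Bool)) :=
  (List.range (hdeg G a.1)).map fun j => quad (child' a.1 (qY a j)) (child' a.1 (qZ a j))

theorem ofFn_val_eq_range_map {β : Type*} (k : ℕ) (f : ℕ → β) :
    (List.ofFn fun j : Fin k => f j) = (List.range k).map f := by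
  exact List.ext_getElem (by simp) (fun i h1 h2 => by simp)

theorem wordInv_flatten {β : Type*} (L : List (List (β × Bool))) :
    wordInv L.flatten = ((L.map wordInv).reverse).flatten := by
  induction L with
  | nil => rfl
  | cons l L ih => simp [wordInv_append, ih]

theorem reverse_range_map {β : Type*} (k : ℕ) (f : ℕ → β) :
    ((List.range k).map f).reverse = (List.range k).map fun j => f (k - 1 - j) := by
  induction k generalizing f with
  | zero => rfl
  | succ k ih =>
    conv_lhs => rw [List.range_succ]
    conv_rhs => rw [List.range_succ_eq_map]
    simp only [List.map_append, List.map_cons, List.reverse_append, List.map_map,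
      List.reverse_cons, List.reverse_nil, List.nil_append, List.cons_append,
      List.singleton_append, List.map_nil]
    rw [ih]
    refine congrArg₂ _ (by norm_num) (List.map_congr_left fun j hj => ?_)
    rw [List.mem_range] at hj
    simp only [Function.comp_apply]
    congr 1
    omega

theorem wordInv_quad (y z : GropeGen G (m + 1)) : wordInv (quad y z) = quad z y := rfl

theorem letterExp_true_eq (c : GropeGen G m) :
    letterExp G (c, true) = (blocks (c, true)).flatten := by
  have hd := hdeg_pos c
  show (List.ofFn _).flatten = _
  rw [blocks, ← ofFn_val_eq_range_map]
  refine congrArg List.flatten (congrArg List.ofFn (funext fun j => ?_))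
  have hj : (j : ℕ) < hdeg G c := j.2
  have h1 : 2 * (j : ℕ) < G.deg c.1 := by omega
  have h2 : 2 * (j : ℕ) + 1 < G.deg c.1 := by omega
  show _ = quad (child' c (qY (c, true) j)) (child' c (qZ (c, true) j))
  have e1 : qY (c, true) (j : ℕ) = 2 * (j : ℕ) := rfl
  have e2 : qZ (c, true) (j : ℕ) = 2 * (j : ℕ) + 1 := rfl
  rw [e1, e2, quad, child', dif_pos h1, child', dif_pos h2]

theorem letterExp_false_eq_wordInv (c : GropeGen G m) :
    letterExp G (c, false) = wordInv (letterExp G (c, true)) := rfl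

theorem letterExp_flip (a : GropeGen G m × Bool) :
    letterExp G (a.1, !a.2) = wordInv (letterExp G a) := by
  rcases a with ⟨c, b⟩
  cases b with
  | true => exact letterExp_false_eq_wordInv c
  | false =>
    show letterExp G (c, true) = wordInv (letterExp G (c, false))
    rw [letterExp_false_eq_wordInv, wordInv_wordInv]

theorem letterExp_eq (a : GropeGen G m × Bool) :
    letterExp G a = (blocks a).flatten := by
  rcases a with ⟨c, b⟩
  cases b with
  | true => exact letterExp_true_eq c
  | false =>
    rw [letterExp_false_eq_wordInv, letterExp_true_eq c, wordInv_flatten, blocks]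
    rw [List.map_map, reverse_range_map]
    show _ = (blocks (c, false)).flatten
    rw [blocks]
    refine congrArg List.flatten (List.map_congr_left fun j hj => ?_)
    rw [List.mem_range] at hj
    have hj' : j < hdeg G c := hj
    have hd := hdeg_pos c
    simp only [Function.comp_apply, wordInv_quad]
    have e1 : qZ (c, true) (hdeg G (c, true).1 - 1 - j) = qY (c, false) j := by
      show 2 * (hdeg G c - 1 - j) + 1 = G.deg c.1 - (2 * j + 1)
      omega
    have e2 : qY (c, true) (hdeg G (c, true).1 - 1 - j) = qZ (c, false) j := by
      show 2 * (hdeg G c - 1 - j) = G.deg c.1 - (2 * j + 2)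
      omega
    rw [e1, e2]

end GropeAux
section GropeAux2

open List

variable {G : GropeFrame} {m : ℕ}

theorem qY_lt (a : GropeGen G m × Bool) {j : ℕ} (hj : j < hdeg G a.1) :
    qY a j < G.deg a.1.1 := by
  rcases a with ⟨c, b⟩
  have hj' : j < hdeg G c := hj
  obtain ⟨h1, h2⟩ := hdeg_pos c
  cases b
  · show G.deg c.1 - (2 * j + 1) < G.deg c.1
    omega
  · show 2 * j < G.deg c.1
    omega

theorem qZ_lt (a : GropeGen G m × Bool) {j : ℕ} (hj : j < hdeg G a.1) :
    qZ a j < G.deg a.1.1 := by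
  rcases a with ⟨c, b⟩
  have hj' : j < hdeg G c := hj
  obtain ⟨h1, h2⟩ := hdeg_pos c
  cases b
  · show G.deg c.1 - (2 * j + 2) < G.deg c.1
    omega
  · show 2 * j + 1 < G.deg c.1
    omega

theorem blocks_length (a : GropeGen G m × Bool) : (blocks a).length = hdeg G a.1 := by
  simp [blocks]

theorem blocks_mem_length {a : GropeGen G m × Bool} {l} (hl : l ∈ blocks a) : l.length = 4 := by
  simp only [blocks, List.mem_map] at hl
  obtain ⟨j, -, rfl⟩ := hl
  rfl

theorem flatten_map_range_length {β : Type*} (k : ℕ) (f : ℕ → List β)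
    (hf : ∀ j, (f j).length = 4) : (((List.range k).map f).flatten).length = 4 * k := by
  induction k with
  | zero => rfl
  | succ k ih =>
    rw [List.range_succ, List.map_append, List.flatten_append]
    simp only [List.length_append, ih, List.map_cons, List.map_nil, List.flatten_cons,
      List.flatten_nil, List.append_nil, hf]
    omega

theorem letterExp_length (a : GropeGen G m × Bool) :
    (letterExp G a).length = 4 * hdeg G a.1 := by
  rw [letterExp_eq, blocks]
  exact flatten_map_range_length _ _ fun j => rfl

theorem flatten_drop4 {β : Type*} :
    ∀ (L : List (List β)), (∀ l ∈ L, l.length = 4) → ∀ (j r : ℕ) (l : List β),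
      L[j]? = some l → r < 4 →
      L.flatten.drop (4 * j + r) = l.drop r ++ (L.drop (j + 1)).flatten := by
  intro L
  induction L with
  | nil => intro _ j r l h _; simp at h
  | cons b L ih =>
    intro hlen j r l hj hr
    cases j with
    | zero =>
      simp only [List.getElem?_cons_zero, Option.some.injEq] at hj
      have hb : b.length = 4 := hlen b List.mem_cons_self
      rw [List.flatten_cons]
      have h0 : 4 * 0 + r = r := by omega
      rw [h0, ← hj, List.drop_append_of_le_length (by omega)]
      simp
    | succ j =>
      simp only [List.getElem?_cons_succ] at hj
      have hb : b.length = 4 := hlen b List.mem_cons_self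
      rw [List.flatten_cons]
      have h4 : 4 * (j + 1) + r = b.length + (4 * j + r) := by omega
      rw [h4, List.drop_length_add_append]
      rw [ih (fun l hl => hlen l (List.mem_cons_of_mem _ hl)) j r l hj hr]
      simp

theorem blocks_getElem? {a : GropeGen G m × Bool} {j : ℕ} (hj : j < hdeg G a.1) :
    (blocks a)[j]? = some (quad (child' a.1 (qY a j)) (child' a.1 (qZ a j))) := by
  simp [blocks, List.getElem?_map, List.getElem?_range hj]

theorem quadflat_cons {k : ℕ} (hk : 0 < k) (Y Z : ℕ → GropeGen G (m + 1)) :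
    ∃ rest, ((List.range k).map fun j => quad (Y j) (Z j)).flatten =
      (Y 0, true) :: (Z 0, true) :: rest := by
  obtain ⟨k', rfl⟩ : ∃ k', k = k' + 1 := ⟨k - 1, by omega⟩
  rw [List.range_succ_eq_map]
  exact ⟨(Y 0, false) :: (Z 0, false) ::
    (((List.range k').map fun j => quad (Y (j+1)) (Z (j+1))).flatten), by
      simp [quad, List.map_map, Function.comp_def]⟩

theorem letterExp_cons (a : GropeGen G m × Bool) :
    ∃ rest, letterExp G a =
      (child' a.1 (qY a 0), true) :: (child' a.1 (qZ a 0), true) :: rest := by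
  rw [letterExp_eq, blocks]
  exact quadflat_cons (hdeg_pos a.1).1 _ _

end GropeAux2
section GropeAux3

open List

variable {G : GropeFrame} {m : ℕ}

theorem eq_of_qY0 {a b : GropeGen G m × Bool}
    (h : child' a.1 (qY a 0) = child' b.1 (qY b 0)) : a = b := by
  obtain ⟨h1, h2⟩ := child'_inj (qY_lt a (hdeg_pos a.1).1) (qY_lt b (hdeg_pos b.1).1) h
  rcases a with ⟨c, ba⟩; rcases b with ⟨d, bb⟩
  obtain rfl : c = d := h1
  obtain ⟨hk, hd⟩ := hdeg_pos c
  suffices hs : ba = bb by rw [hs]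
  cases ba <;> cases bb <;> first
    | rfl
    | · exfalso
        revert h2
        first
          | · show ¬ G.deg c.1 - (2 * 0 + 1) = 2 * 0
              omega
          | · show ¬ 2 * 0 = G.deg c.1 - (2 * 0 + 1)
              omega

theorem noRot {u v : GropeGen G m × Bool} {t : ℕ} (ht0 : 0 < t)
    (ht : t < (letterExp G u).length) (R : List (GropeGen G (m + 1) × Bool))
    (h : ((letterExp G u).drop t ++ R).take 2 <+: letterExp G v) : False := by
  obtain ⟨hku, hdu⟩ := hdeg_pos u.1
  have hlen := letterExp_length u
  have hj : t / 4 < hdeg G u.1 := by omega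
  have hr : t % 4 < 4 := Nat.mod_lt _ (by omega)
  have hget := blocks_getElem? (a := u) hj
  have hdrop := flatten_drop4 (blocks u) (fun l hl => blocks_mem_length hl) (t / 4) (t % 4) _
    hget hr
  rw [← letterExp_eq, Nat.div_add_mod] at hdrop
  obtain ⟨restv, hv⟩ := letterExp_cons v
  rw [hdrop, hv] at h
  obtain ⟨s, hs⟩ := h
  have hcases : t % 4 = 0 ∨ t % 4 = 1 ∨ t % 4 = 2 ∨ t % 4 = 3 := by omega
  rcases hcases with h4 | h4 | h4 | h4 <;> rw [h4] at hs <;>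
    simp only [quad, List.drop_succ_cons, List.drop_zero, List.cons_append, List.take_succ_cons,
      List.take_zero, List.take_cons, List.cons.injEq, Prod.mk.injEq] at hs
  · -- t % 4 = 0 : real case
    obtain ⟨⟨hY, -⟩, ⟨hZ, -⟩, -⟩ := hs
    have hj0 : 0 < t / 4 := by omega
    obtain ⟨hpar, hidx⟩ := child'_inj (qY_lt u hj) (qY_lt v (hdeg_pos v.1).1) hY
    obtain ⟨-, hidx2⟩ := child'_inj (qZ_lt u hj) (qZ_lt v (hdeg_pos v.1).1) hZ
    rcases u with ⟨c, bu⟩; rcases v with ⟨d, bv⟩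
    obtain rfl : c = d := hpar
    have hjk : t / 4 < hdeg G c := hj
    obtain ⟨hk, hd⟩ := hdeg_pos c
    cases bu <;> cases bv
    · have e1 : G.deg c.1 - (2 * (t / 4) + 1) = G.deg c.1 - (2 * 0 + 1) := hidx
      omega
    · have e1 : G.deg c.1 - (2 * (t / 4) + 1) = 2 * 0 := hidx
      omega
    · have e1 : 2 * (t / 4) = G.deg c.1 - (2 * 0 + 1) := hidx
      have e2 : 2 * (t / 4) + 1 = G.deg c.1 - (2 * 0 + 2) := hidx2
      omega
    · have e1 : 2 * (t / 4) = 2 * 0 := hidx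
      omega
  · exact absurd hs.2.1.2 (by simp)
  · exact absurd hs.1.2 (by simp)
  · exact absurd hs.1.2 (by simp)

end GropeAux3
section GropeAux4

open List

variable {G : GropeFrame} {m : ℕ}

/-- one-step expansion of words -/
noncomputable def Dstep (G : GropeFrame) {m : ℕ} (w : List (GropeGen G m × Bool)) :
    List (GropeGen G (m + 1) × Bool) := (w.map (letterExp G)).flatten

@[simp] theorem Dstep_nil : Dstep G ([] : List (GropeGen G m × Bool)) = [] := rfl

theorem Dstep_cons (a : GropeGen G m × Bool) (w) :
    Dstep G (a :: w) = letterExp G a ++ Dstep G w := by simp [Dstep]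

theorem Dstep_append (w v : List (GropeGen G m × Bool)) :
    Dstep G (w ++ v) = Dstep G w ++ Dstep G v := by simp [Dstep]

theorem letterExp_ne_nil (a : GropeGen G m × Bool) : letterExp G a ≠ [] := by
  intro h
  have h2 := letterExp_length a
  rw [h] at h2
  have h3 := (hdeg_pos a.1).1
  simp only [List.length_nil] at h2
  omega

theorem Dstep_eq_nil_iff {w : List (GropeGen G m × Bool)} : Dstep G w = [] ↔ w = [] := by
  cases w with
  | nil => simp
  | cons a w =>
    rw [Dstep_cons]
    simp [List.append_eq_nil_iff, letterExp_ne_nil a]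

theorem Dstep_inj : ∀ {w v : List (GropeGen G m × Bool)}, Dstep G w = Dstep G v → w = v := by
  intro w
  induction w with
  | nil =>
    intro v h
    symm
    exact Dstep_eq_nil_iff.1 (by rw [← h]; rfl)
  | cons a t ih =>
    intro v h
    cases v with
    | nil => exact absurd (Dstep_eq_nil_iff.1 h) (by simp)
    | cons b s =>
      rw [Dstep_cons, Dstep_cons] at h
      obtain ⟨ra, ha⟩ := letterExp_cons a
      obtain ⟨rb, hb⟩ := letterExp_cons b
      have hab : a = b := by
        have h' := h
        rw [ha, hb] at h'
        simp only [List.cons_append, List.cons.injEq, Prod.mk.injEq] at h'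
        exact eq_of_qY0 h'.1.1
      subst hab
      rw [List.append_cancel_left_eq] at h
      rw [ih h]

theorem isReduced_quadflat {k : ℕ} (Y Z : ℕ → GropeGen G (m + 1))
    (hYZ : ∀ j < k, Y j ≠ Z j) (hZY : ∀ j, j + 1 < k → Z j ≠ Y (j + 1)) :
    IsReducedWord (((List.range k).map fun j => quad (Y j) (Z j)).flatten) := by
  induction k generalizing Y Z with
  | zero => exact List.isChain_nil
  | succ k ih =>
    rw [List.range_succ_eq_map, List.map_cons, List.map_map, List.flatten_cons]
    have hch : IsReducedWord (((List.range k).map fun j => quad (Y (j + 1)) (Z (j + 1))).flatten) := by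
      refine ih _ _ (fun j hj => hYZ (j + 1) (by omega)) (fun j hj => hZY (j + 1) (by omega))
    refine List.IsChain.append ?_ hch ?_
    · show List.Chain' _ [(Y 0, true), (Z 0, true), (Y 0, false), (Z 0, false)]
      refine List.isChain_cons_cons.2 ⟨by simp, List.isChain_cons_cons.2 ⟨?_, List.isChain_cons_cons.2
        ⟨by simp, List.isChain_singleton _⟩⟩⟩
      rintro ⟨h1, -⟩
      exact hYZ 0 (by omega) h1.symm
    · intro x hx y hy
      rw [show (quad (Y 0) (Z 0)).getLast? = some (Z 0, false) from rfl,
        Option.mem_some_iff] at hx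
      subst hx
      cases k with
      | zero => simp at hy
      | succ k =>
        obtain ⟨rest, hrest⟩ := quadflat_cons (k := k + 1) (Nat.succ_pos k)
          (fun j => Y (j + 1)) (fun j => Z (j + 1))
        have he : (List.map ((fun j => quad (Y j) (Z j)) ∘ Nat.succ)
            (List.range (k + 1))).flatten = (Y 1, true) :: (Z 1, true) :: rest := hrest
        rw [he] at hy
        simp only [List.head?_cons, Option.mem_some_iff] at hy
        subst hy
        rintro ⟨h1, -⟩
        exact hZY 0 (by omega) h1

theorem isReduced_letterExp (a : GropeGen G m × Bool) : IsReducedWord (letterExp G a) := by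
  rw [letterExp_eq, blocks]
  refine isReduced_quadflat _ _ (fun j hj => ?_) (fun j hj => ?_)
  · intro h
    obtain ⟨-, h2⟩ := child'_inj (qY_lt a hj) (qZ_lt a hj) h
    rcases a with ⟨c, b⟩
    have hj' : j < hdeg G c := hj
    obtain ⟨hk, hd⟩ := hdeg_pos c
    cases b
    · have e : G.deg c.1 - (2 * j + 1) = G.deg c.1 - (2 * j + 2) := h2
      omega
    · have e : 2 * j = 2 * j + 1 := h2
      omega
  · intro h
    obtain ⟨-, h2⟩ := child'_inj (qZ_lt a (by omega : j < hdeg G a.1))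
      (qY_lt a (by omega : j + 1 < hdeg G a.1)) h
    rcases a with ⟨c, b⟩
    have hj' : j + 1 < hdeg G c := hj
    obtain ⟨hk, hd⟩ := hdeg_pos c
    cases b
    · have e : G.deg c.1 - (2 * j + 2) = G.deg c.1 - (2 * (j + 1) + 1) := h2
      omega
    · have e : 2 * j + 1 = 2 * (j + 1) := h2
      omega

theorem head?_wordInv {β : Type*} (w : List (β × Bool)) :
    (wordInv w).head? = Option.map (fun p => (p.1, !p.2)) w.getLast? := by
  rw [wordInv, List.head?_reverse, List.getLast?_map]

theorem getLast?_letterExp (a : GropeGen G m × Bool) :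
    (letterExp G a).getLast? = some (child' a.1 (qY (a.1, !a.2) 0), false) := by
  have h1 : (wordInv (letterExp G a)).head? = some (child' a.1 (qY (a.1, !a.2) 0), true) := by
    rw [← letterExp_flip]
    obtain ⟨rest, hr⟩ := letterExp_cons (a.1, !a.2)
    rw [hr]
    rfl
  rw [head?_wordInv] at h1
  cases hc : (letterExp G a).getLast? with
  | none => rw [hc] at h1; simp at h1
  | some p =>
    rw [hc] at h1
    simp only [Option.map_some, Option.some.injEq] at h1
    have hp1 : p.1 = child' a.1 (qY (a.1, !a.2) 0) := congrArg Prod.fst h1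
    have hp2 : (!p.2) = true := congrArg Prod.snd h1
    have : p = (child' a.1 (qY (a.1, !a.2) 0), false) := by
      ext
      · rw [hp1]
      · simp only []
        revert hp2
        cases p.2 <;> simp
    rw [this]

theorem Dstep_reduced {w : List (GropeGen G m × Bool)} (hw : IsReducedWord w) :
    IsReducedWord (Dstep G w) := by
  induction w with
  | nil => exact List.isChain_nil
  | cons a t ih =>
    rw [Dstep_cons]
    refine List.IsChain.append (isReduced_letterExp a) (ih hw.tail) ?_
    intro x hx y hy
    rw [getLast?_letterExp a, Option.mem_some_iff] at hx
    subst hx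
    cases t with
    | nil => simp at hy
    | cons b s =>
      rw [Dstep_cons, List.head?_append_of_ne_nil _ (letterExp_ne_nil b)] at hy
      obtain ⟨rb, hb⟩ := letterExp_cons b
      rw [hb] at hy
      simp only [List.head?_cons, Option.mem_some_iff] at hy
      subst hy
      rintro ⟨h1, -⟩
      have hflip : (a.1, !a.2) = b := eq_of_qY0 h1
      have hbad := (List.isChain_cons_cons.1 hw).1
      exact hbad ⟨congrArg Prod.fst hflip.symm ▸ rfl, by rw [← hflip]⟩

theorem cut : ∀ (U : List (GropeGen G m × Bool)) (A C : List (GropeGen G (m + 1) × Bool)),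
    Dstep G U = A ++ C → C ≠ [] → (∃ v, C.take 2 <+: letterExp G v) →
    ∃ U₁ U₂, U = U₁ ++ U₂ ∧ Dstep G U₁ = A ∧ Dstep G U₂ = C := by
  intro U
  induction U with
  | nil =>
    intro A C h hC _
    rw [Dstep_nil] at h
    exact absurd (List.append_eq_nil_iff.1 h.symm).2 hC
  | cons u T ih =>
    intro A C h hC hyp
    rw [Dstep_cons] at h
    rcases Nat.eq_zero_or_pos A.length with hA | hA
    · obtain rfl : A = [] := List.length_eq_zero_iff.1 hA
      exact ⟨[], u :: T, rfl, rfl, by rw [Dstep_cons, h]; rfl⟩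
    rcases lt_or_ge A.length (letterExp G u).length with hlt | hle
    · exfalso
      have hA' : A = (letterExp G u).take A.length := by
        have h1 := congrArg (List.take A.length) h
        rw [List.take_append_of_le_length (le_of_lt hlt), List.take_left] at h1
        exact h1.symm
      have hC' : C = (letterExp G u).drop A.length ++ Dstep G T := by
        have h1 := congrArg (List.drop A.length) h
        rw [List.drop_append_of_le_length (le_of_lt hlt), List.drop_left] at h1
        exact h1.symm
      obtain ⟨v, hv⟩ := hyp
      rw [hC'] at hv
      exact noRot hA hlt _ hv
    · have hA' : A = letterExp G u ++ A.drop (letterExp G u).length := by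
        have h1 := congrArg (List.take (letterExp G u).length) h
        rw [List.take_left, List.take_append_of_le_length hle] at h1
        conv_lhs => rw [← List.take_append_drop (letterExp G u).length A]
        rw [← h1]
      have hDT : Dstep G T = A.drop (letterExp G u).length ++ C := by
        rw [hA', List.append_assoc] at h
        exact List.append_cancel_left h
      obtain ⟨U₁, U₂, rfl, h1, h2⟩ := ih _ _ hDT hC hyp
      exact ⟨u :: U₁, U₂, rfl, by rw [Dstep_cons, h1, ← hA'], h2⟩

end GropeAux4
section GropeAux5

open List

variable {G : GropeFrame} {m n : ℕ}

theorem wordExp_self (h : m ≤ m) (w : List (GropeGen G m × Bool)) :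
    wordExp G h w = w := by unfold wordExp; exact Nat.leRecOn_self (C := fun k => List (GropeGen G k × Bool)) w

theorem wordExp_succ (h : m ≤ n) (h2 : m ≤ n + 1) (w : List (GropeGen G m × Bool)) :
    wordExp G h2 w = Dstep G (wordExp G h w) := by unfold wordExp Dstep; exact Nat.leRecOn_succ (C := fun k => List (GropeGen G k × Bool)) h w

theorem gropeEle_self (h : m ≤ m) (x : FreeGroup (GropeGen G m)) :
    gropeEle G h x = x := by unfold gropeEle; exact Nat.leRecOn_self (C := fun k => FreeGroup (GropeGen G k)) x

theorem gropeEle_succ (h : m ≤ n) (h2 : m ≤ n + 1) (x : FreeGroup (GropeGen G m)) :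
    gropeEle G h2 x = gropeE G n (gropeEle G h x) := by unfold gropeEle; exact Nat.leRecOn_succ (C := fun k => FreeGroup (GropeGen G k)) h x

theorem wordExp_reduced (h : m ≤ n) {w : List (GropeGen G m × Bool)} (hw : IsReducedWord w) :
    IsReducedWord (wordExp G h w) := by
  induction n, h using Nat.le_induction with
  | base => rwa [wordExp_self]
  | succ n h ih => rw [wordExp_succ h]; exact Dstep_reduced ih

theorem wordInv_cons (a : GropeGen G m × Bool) (w) :
    wordInv (a :: w) = wordInv w ++ [(a.1, !a.2)] := by simp [wordInv]

theorem Dstep_wordInv (w : List (GropeGen G m × Bool)) :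
    Dstep G (wordInv w) = wordInv (Dstep G w) := by
  induction w with
  | nil => rfl
  | cons a t ih =>
    rw [wordInv_cons, Dstep_append, ih]
    conv_rhs => rw [Dstep_cons, wordInv_append]
    congr 1
    show Dstep G [(a.1, !a.2)] = _
    rw [Dstep_cons, Dstep_nil, List.append_nil, letterExp_flip]

theorem wordExp_wordInv (h : m ≤ n) (w : List (GropeGen G m × Bool)) :
    wordExp G h (wordInv w) = wordInv (wordExp G h w) := by
  induction n, h using Nat.le_induction with
  | base => rw [wordExp_self, wordExp_self]
  | succ n h ih => rw [wordExp_succ h, wordExp_succ h, ih, Dstep_wordInv]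

theorem wordExp_ne_nil (h : m ≤ n) {w : List (GropeGen G m × Bool)} (hw : w ≠ []) :
    wordExp G h w ≠ [] := by
  induction n, h using Nat.le_induction with
  | base => rwa [wordExp_self]
  | succ n h ih => rw [wordExp_succ h]; simpa [Dstep_eq_nil_iff] using ih

theorem mk_flatten {β : Type*} (L : List (List (β × Bool))) :
    FreeGroup.mk L.flatten = (L.map FreeGroup.mk).prod := by
  induction L with
  | nil => rfl
  | cons l L ih => rw [List.flatten_cons, mk_append, ih, List.map_cons, List.prod_cons]

theorem mk_quad (y z : GropeGen G (m + 1)) :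
    FreeGroup.mk (quad y z) = ⁅FreeGroup.of y, FreeGroup.of z⁆ := by
  show FreeGroup.mk ([(y, true)] ++ ([(z, true)] ++ ([(y, false)] ++ [(z, false)]))) = _
  rw [mk_append, mk_append, mk_append]
  have h1 : FreeGroup.mk [(y, false)] = (FreeGroup.of y)⁻¹ := by
    rw [show FreeGroup.of y = FreeGroup.mk [(y, true)] from rfl, FreeGroup.inv_mk]; rfl
  have h2 : FreeGroup.mk [(z, false)] = (FreeGroup.of z)⁻¹ := by
    rw [show FreeGroup.of z = FreeGroup.mk [(z, true)] from rfl, FreeGroup.inv_mk]; rfl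
  rw [h1, h2]
  rfl

theorem gropeE_of (c : GropeGen G m) :
    gropeE G m (FreeGroup.of c) = ((List.range (hdeg G c)).map fun j =>
      ⁅FreeGroup.of (child' c (qY (c, true) j)), FreeGroup.of (child' c (qZ (c, true) j))⁆).prod := by
  rw [gropeE, FreeGroup.lift_apply_of, ← ofFn_val_eq_range_map]
  refine congrArg List.prod (congrArg List.ofFn (funext fun j => ?_))
  have hj : (j : ℕ) < hdeg G c := j.2
  have hd := hdeg_pos c
  have h1 : 2 * (j : ℕ) < G.deg c.1 := by omega
  have h2 : 2 * (j : ℕ) + 1 < G.deg c.1 := by omega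
  have e1 : child' c (qY (c, true) (j : ℕ)) = gropeChild c (2 * (j : ℕ)) h1 := by
    show child' c (2 * (j : ℕ)) = _
    rw [child', dif_pos h1]
  have e2 : child' c (qZ (c, true) (j : ℕ)) = gropeChild c (2 * (j : ℕ) + 1) h2 := by
    show child' c (2 * (j : ℕ) + 1) = _
    rw [child', dif_pos h2]
  rw [e1, e2]

theorem mk_letterExp_true (c : GropeGen G m) :
    FreeGroup.mk (letterExp G (c, true)) = gropeE G m (FreeGroup.of c) := by
  rw [letterExp_eq, mk_flatten, blocks, List.map_map, gropeE_of]
  refine congrArg List.prod (List.map_congr_left fun j hj => ?_)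
  simp only [Function.comp_apply]
  exact mk_quad _ _

theorem mk_Dstep (w : List (GropeGen G m × Bool)) :
    FreeGroup.mk (Dstep G w) = gropeE G m (FreeGroup.mk w) := by
  induction w with
  | nil =>
    show FreeGroup.mk [] = gropeE G m 1
    rw [map_one]
    rfl
  | cons a t ih =>
    rw [Dstep_cons, mk_append, ih]
    have hsplit : FreeGroup.mk (a :: t) = FreeGroup.mk [a] * FreeGroup.mk t := by
      rw [← mk_append]; rfl
    rw [hsplit, map_mul]
    congr 1
    rcases a with ⟨c, b⟩
    cases b
    · have h1 : FreeGroup.mk [(c, false)] = (FreeGroup.of c)⁻¹ := by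
        rw [show FreeGroup.of c = FreeGroup.mk [(c, true)] from rfl, FreeGroup.inv_mk]; rfl
      rw [letterExp_false_eq_wordInv, mk_wordInv, mk_letterExp_true, h1, map_inv]
    · rw [mk_letterExp_true]
      rfl

theorem mk_wordExp (h : m ≤ n) (w : List (GropeGen G m × Bool)) :
    FreeGroup.mk (wordExp G h w) = gropeEle G h (FreeGroup.mk w) := by
  induction n, h using Nat.le_induction with
  | base => rw [wordExp_self, gropeEle_self]
  | succ n h ih => rw [wordExp_succ h, gropeEle_succ h, mk_Dstep, ih]

theorem gropeEle_mul (h : m ≤ n) (x y : FreeGroup (GropeGen G m)) :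
    gropeEle G h (x * y) = gropeEle G h x * gropeEle G h y := by
  induction n, h using Nat.le_induction with
  | base => rw [gropeEle_self, gropeEle_self, gropeEle_self]
  | succ n h ih => rw [gropeEle_succ h, gropeEle_succ h, gropeEle_succ h, ih, map_mul]

theorem gropeEle_inv (h : m ≤ n) (x : FreeGroup (GropeGen G m)) :
    gropeEle G h x⁻¹ = (gropeEle G h x)⁻¹ := by
  induction n, h using Nat.le_induction with
  | base => rw [gropeEle_self, gropeEle_self]
  | succ n h ih => rw [gropeEle_succ h, gropeEle_succ h, ih, map_inv]

theorem memF_mul {g₁ g₂ : FreeGroup (GropeGen G n)} (h1 : MemF G m g₁) (h2 : MemF G m g₂) :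
    MemF G m (g₁ * g₂) := by
  obtain ⟨h, x, hx⟩ := h1
  obtain ⟨h2', y, hy⟩ := h2
  have hy' : gropeEle G h y = g₂ := hy
  exact ⟨h, x * y, by rw [gropeEle_mul, hx, hy']⟩

theorem memF_inv {g : FreeGroup (GropeGen G n)} (h1 : MemF G m g) : MemF G m g⁻¹ := by
  obtain ⟨h, x, hx⟩ := h1
  exact ⟨h, x⁻¹, by rw [gropeEle_inv, hx]⟩

theorem memF_mk_wordExp (h : m ≤ n) (w : List (GropeGen G m × Bool)) :
    MemF G m (FreeGroup.mk (wordExp G h w)) := ⟨h, FreeGroup.mk w, (mk_wordExp h w).symm⟩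

theorem memF_extract (h : m ≤ n) {g : FreeGroup (GropeGen G n)} (hg : MemF G m g)
    {L : List (GropeGen G n × Bool)} (hL : IsReducedWord L) (hgl : FreeGroup.mk L = g) :
    ∃ w, wordExp G h w = L := by
  classical
  obtain ⟨h', x, hx⟩ := hg
  refine ⟨x.toWord, ?_⟩
  have hred : IsReducedWord (wordExp G h x.toWord) := wordExp_reduced h (isReducedWord_toWord x)
  refine (hred.eq_of_mk_eq hL ?_)
  rw [mk_wordExp, FreeGroup.mk_toWord, hgl, ← hx]

theorem startsBlock {V : List (GropeGen G m × Bool)} {C A : List (GropeGen G (m + 1) × Bool)}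
    (hV : Dstep G V = C ++ A) (hC : C ≠ []) : ∃ v, C.take 2 <+: letterExp G v := by
  cases V with
  | nil => exact absurd (List.append_eq_nil_iff.1 (Dstep_nil ▸ hV).symm).1 hC
  | cons v Vt =>
    refine ⟨v, ?_⟩
    rw [Dstep_cons] at hV
    have hpre : C.take 2 <+: letterExp G v ++ Dstep G Vt :=
      hV ▸ (C.take_prefix 2).trans (List.prefix_append C A)
    have hlen : (C.take 2).length ≤ (letterExp G v).length := by
      have := letterExp_length v
      have := (hdeg_pos v.1).1
      have := C.length_take_le 2
      omega
    rw [List.prefix_iff_eq_take] at hpre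
    rw [List.take_append_of_le_length hlen] at hpre
    rw [hpre]
    exact List.take_prefix _ _

theorem mainSplit (h : m ≤ n) :
    ∀ (A C : List (GropeGen G n × Bool)) (W W' : List (GropeGen G m × Bool)), A ≠ [] → C ≠ [] →
      wordExp G h W = A ++ C → wordExp G h W' = C ++ A →
      ∃ W₁ W₂, W = W₁ ++ W₂ ∧ wordExp G h W₁ = A ∧ wordExp G h W₂ = C ∧ W' = W₂ ++ W₁ := by
  induction n, h using Nat.le_induction with
  | base =>
    intro A C W W' hA hC hW hW'
    rw [wordExp_self] at hW hW'
    exact ⟨A, C, hW, wordExp_self _ _, wordExp_self _ _, hW'⟩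
  | succ n h ih =>
    intro A C W W' hA hC hW hW'
    rw [wordExp_succ h] at hW hW'
    obtain ⟨U₁, U₂, hU, hU1, hU2⟩ := cut _ _ _ hW hC (startsBlock hW' hC)
    obtain ⟨V₁, V₂, hV, hV1, hV2⟩ := cut _ _ _ hW' hA (startsBlock hW hA)
    have hVU1 : V₁ = U₂ := Dstep_inj (hV1.trans hU2.symm)
    have hVU2 : V₂ = U₁ := Dstep_inj (hV2.trans hU1.symm)
    rw [hVU1, hVU2] at hV
    have hU1ne : U₁ ≠ [] := by
      intro hcon; rw [hcon, Dstep_nil] at hU1; exact hA hU1.symm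
    have hU2ne : U₂ ≠ [] := by
      intro hcon; rw [hcon, Dstep_nil] at hU2; exact hC hU2.symm
    obtain ⟨W₁, W₂, hsplit, hW1, hW2, hsplit'⟩ := ih U₁ U₂ W W' hU1ne hU2ne hU hV
    exact ⟨W₁, W₂, hsplit, by rw [wordExp_succ h, hW1, hU1], by rw [wordExp_succ h, hW2, hU2],
      hsplit'⟩

end GropeAux5


/-- **Lemma 10 (induction1).** Let `m < n` and let `A, B ∈ 𝒲(E_n)` be non-empty reduced
words with `ABA⁻B⁻ ≠ e` such that `AB` and `A⁻B⁻` are reduced words. Then (1.1)–(1.3)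
hold. -/
theorem induction1 (G : GropeFrame) {m n : ℕ} (hmn : m < n)
    (A B : List (GropeGen G n × Bool)) (hA : A ≠ []) (hB : B ≠ [])
    (hAred : IsReducedWord A) (hBred : IsReducedWord B)
    (hne : FreeGroup.mk (A ++ B ++ wordInv A ++ wordInv B) ≠ 1)
    (hred1 : IsReducedWord (A ++ B)) (hred2 : IsReducedWord (wordInv A ++ wordInv B)) :
    -- (1.1)
    (∀ B₀, B = B₀ ++ A →
      B₀ ≠ [] ∧ IsReducedWord (A ++ B₀) ∧ IsReducedWord (wordInv A ++ wordInv B₀) ∧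
      FreeGroup.mk (A ++ B₀ ++ wordInv A ++ wordInv B₀) =
        FreeGroup.mk (A ++ B ++ wordInv A ++ wordInv B) ∧
      (MemF G m (FreeGroup.mk (A ++ B₀)) → MemF G m (FreeGroup.mk (wordInv A ++ wordInv B₀)) →
        MemF G m (FreeGroup.mk (A ++ B)) ∧ MemF G m (FreeGroup.mk (wordInv A ++ wordInv B)))) ∧
    -- (1.2)
    (∀ A₀, A = A₀ ++ B →
      A₀ ≠ [] ∧ IsReducedWord (A₀ ++ B) ∧ IsReducedWord (wordInv A₀ ++ wordInv B) ∧
      FreeGroup.mk (A₀ ++ B ++ wordInv A₀ ++ wordInv B) =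
        FreeGroup.mk (A ++ B ++ wordInv A ++ wordInv B) ∧
      (MemF G m (FreeGroup.mk (A₀ ++ B)) → MemF G m (FreeGroup.mk (wordInv A₀ ++ wordInv B)) →
        MemF G m (FreeGroup.mk (A ++ B)) ∧ MemF G m (FreeGroup.mk (wordInv A ++ wordInv B)))) ∧
    -- (1.3)
    (∀ A₀ B₀ Z, A = A₀ ++ Z → B = B₀ ++ Z → A₀ ≠ [] → B₀ ≠ [] →
      IsReducedWord (B₀ ++ wordInv A₀) →
      IsReducedWord (A₀ ++ Z ++ B₀ ++ wordInv A₀ ++ wordInv Z ++ wordInv B₀) ∧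
      FreeGroup.mk (A₀ ++ Z ++ B₀ ++ wordInv A₀ ++ wordInv Z ++ wordInv B₀) =
        FreeGroup.mk (A ++ B ++ wordInv A ++ wordInv B) ∧
      (MemF G m (FreeGroup.mk A₀) → MemF G m (FreeGroup.mk B₀) → MemF G m (FreeGroup.mk Z) →
        MemF G m (FreeGroup.mk (A ++ B)) ∧ MemF G m (FreeGroup.mk (wordInv A ++ wordInv B)))) := by
  have hmn' : m ≤ n := hmn.le
  refine ⟨?_, ?_, ?_⟩
  · -- (1.1)
    intro B₀ hB0
    subst hB0
    have hB0ne : B₀ ≠ [] := by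
      rintro rfl
      apply hne
      simp only [List.nil_append, mk_append, mk_wordInv]
      group
    have hred11 : IsReducedWord (A ++ B₀) := hred1.infix ⟨[], A, by simp⟩
    have hred12 : IsReducedWord (wordInv A ++ wordInv B₀) := by
      rw [← wordInv_append]
      exact hBred.wordInv
    refine ⟨hB0ne, hred11, hred12, by simp only [mk_append, mk_wordInv]; group, ?_⟩
    intro hu hv
    obtain ⟨w, hw⟩ := memF_extract hmn' hu hred11 rfl
    obtain ⟨y, hy⟩ := memF_extract hmn' hv hred12 rfl
    have hy' : wordExp G hmn' (wordInv y) = B₀ ++ A := by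
      rw [wordExp_wordInv, hy, wordInv_append, wordInv_wordInv, wordInv_wordInv]
    obtain ⟨W₁, W₂, -, hW1, hW2, -⟩ := mainSplit hmn' A B₀ w (wordInv y) hA hB0ne hw hy'
    have hmA : MemF G m (FreeGroup.mk A) := hW1 ▸ memF_mk_wordExp hmn' W₁
    have hmB0 : MemF G m (FreeGroup.mk B₀) := hW2 ▸ memF_mk_wordExp hmn' W₂
    constructor
    · rw [mk_append, mk_append]
      exact memF_mul hmA (memF_mul hmB0 hmA)
    · rw [mk_append, mk_wordInv, mk_wordInv, mk_append]
      exact memF_mul (memF_inv hmA) (memF_inv (memF_mul hmB0 hmA))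
  · -- (1.2)
    intro A₀ hA0
    subst hA0
    have hA0ne : A₀ ≠ [] := by
      rintro rfl
      apply hne
      simp only [List.nil_append, mk_append, mk_wordInv]
      group
    have hBAB : IsReducedWord (B ++ (A₀ ++ B)) := by
      have h := hred2
      rw [← wordInv_append] at h
      simpa using h.wordInv
    have hBA0 : IsReducedWord (B ++ A₀) := hBAB.infix ⟨[], B, by simp⟩
    have hred22 : IsReducedWord (wordInv A₀ ++ wordInv B) := by
      rw [← wordInv_append]
      exact hBA0.wordInv
    refine ⟨hA0ne, hAred, hred22, by simp only [mk_append, mk_wordInv]; group, ?_⟩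
    intro hu hv
    obtain ⟨w, hw⟩ := memF_extract hmn' hu hAred rfl
    obtain ⟨y, hy⟩ := memF_extract hmn' hv hred22 rfl
    have hy' : wordExp G hmn' (wordInv y) = B ++ A₀ := by
      rw [wordExp_wordInv, hy, wordInv_append, wordInv_wordInv, wordInv_wordInv]
    obtain ⟨W₁, W₂, -, hW1, hW2, -⟩ := mainSplit hmn' A₀ B w (wordInv y) hA0ne hB hw hy'
    have hmA0 : MemF G m (FreeGroup.mk A₀) := hW1 ▸ memF_mk_wordExp hmn' W₁
    have hmB : MemF G m (FreeGroup.mk B) := hW2 ▸ memF_mk_wordExp hmn' W₂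
    constructor
    · rw [mk_append, mk_append]
      exact memF_mul (memF_mul hmA0 hmB) hmB
    · rw [mk_append, mk_wordInv, mk_wordInv, mk_append]
      exact memF_mul (memF_inv (memF_mul hmA0 hmB)) (memF_inv hmB)
  · -- (1.3)
    intro A₀ B₀ Z hA0 hB0 hA0ne hB0ne hredBA
    subst hA0
    subst hB0
    have hBAB : IsReducedWord ((B₀ ++ Z) ++ (A₀ ++ Z)) := by
      have h := hred2
      rw [← wordInv_append] at h
      simpa using h.wordInv
    have hZB0 : IsReducedWord (Z ++ B₀) := hred1.infix ⟨A₀, Z, by simp⟩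
    have hZA0 : IsReducedWord (Z ++ A₀) := hBAB.infix ⟨B₀, Z, by simp⟩
    have hA0Z' : IsReducedWord (wordInv A₀ ++ wordInv Z) := by
      rw [← wordInv_append]; exact hZA0.wordInv
    have hZB0' : IsReducedWord (wordInv Z ++ wordInv B₀) := by
      rw [← wordInv_append]; exact hBred.wordInv
    have hA0invne : wordInv A₀ ≠ [] := by simpa using hA0ne
    have hredfull : IsReducedWord
        (A₀ ++ (Z ++ (B₀ ++ (wordInv A₀ ++ (wordInv Z ++ wordInv B₀))))) := by
      by_cases hZ : Z = []
      · subst hZ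
        simp only [List.nil_append, wordInv_nil]
        have hA0B0' : IsReducedWord (wordInv A₀ ++ wordInv B₀) := by
          rw [← wordInv_append]
          exact (by simpa using hBAB : IsReducedWord (B₀ ++ A₀)).wordInv
        have w4 : IsReducedWord (B₀ ++ (wordInv A₀ ++ wordInv B₀)) :=
          reduced_glue hredBA hA0B0' hA0invne
        exact reduced_glue (by simpa using hred1) w4 hB0ne
      · have hZinvne : wordInv Z ≠ [] := by simpa using hZ
        have w5 : IsReducedWord (wordInv A₀ ++ (wordInv Z ++ wordInv B₀)) :=
          reduced_glue hA0Z' hZB0' hZinvne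
        have w4 : IsReducedWord (B₀ ++ (wordInv A₀ ++ (wordInv Z ++ wordInv B₀))) :=
          reduced_glue hredBA w5 hA0invne
        have w3 : IsReducedWord (Z ++ (B₀ ++ (wordInv A₀ ++ (wordInv Z ++ wordInv B₀)))) :=
          reduced_glue hZB0 w4 hB0ne
        exact reduced_glue hAred w3 hZ
    refine ⟨by simpa only [List.append_assoc] using hredfull,
      by simp only [mk_append, mk_wordInv]; group, ?_⟩
    intro h1 h2 h3
    constructor
    · rw [mk_append, mk_append, mk_append]
      exact memF_mul (memF_mul h1 h3) (memF_mul h2 h3)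
    · rw [mk_append, mk_wordInv, mk_wordInv, mk_append, mk_append]
      exact memF_mul (memF_inv (memF_mul h1 h3)) (memF_inv (memF_mul h2 h3))
end

section
/- Let S be a grope frame, m < n, and A, B, C ∈ W(E_n) reduced words (possibly empty) such that ABA⁻CB⁻C⁻ ≠ e in F_n and both A and BA⁻CB⁻C⁻ are reduced words. Then: (4.1) if A ≡ A₀B⁻, then A₀ and BA₀⁻CB⁻C⁻ are reduced, A₀BA₀⁻CB⁻C⁻ = ABA⁻CB⁻C⁻ in F_n, and if in addition A₀BA₀⁻, CB⁻C⁻ ∈ F_m then ABA⁻, CB⁻C⁻ ∈ F_m; (4.2) if B ≡ A⁻B₀, then B₀A⁻CB₀⁻AC⁻ is reduced, B₀A⁻CB₀⁻AC⁻ = ABA⁻CB⁻C⁻ in F_n, and if in addition B₀A⁻, CB₀⁻AC⁻ ∈ F_m then ABA⁻, CB⁻C⁻ ∈ F_m; (4.3) if A ≡ A₀Z⁻ and B ≡ ZB₀ for non-empty words A₀, B₀ and A₀B₀ is reduced, then A₀B₀ZA₀⁻CB₀⁻Z⁻C⁻ is reduced, A₀B₀ZA₀⁻CB₀⁻Z⁻C⁻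 = ABA⁻CB⁻C⁻ in F_n, and if in addition A₀B₀ZA₀⁻, CB₀⁻Z⁻C⁻ ∈ F_m then ABA⁻, CB⁻C⁻ ∈ F_m. -/
open scoped commutatorElement

/-! Auxiliary lemmas for `induction4`. -/

theorem wordInv_eq_invRev_s12 {α : Type*} (w : List (α × Bool)) :
    wordInv w = FreeGroup.invRev w := rfl

theorem mk_wordInv_s12 {α : Type*} (w : List (α × Bool)) :
    FreeGroup.mk (wordInv w) = (FreeGroup.mk w)⁻¹ := rfl

theorem wordInv_append_s12 {α : Type*} (l₁ l₂ : List (α × Bool)) :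
    wordInv (l₁ ++ l₂) = wordInv l₂ ++ wordInv l₁ := by
  simp [wordInv]

theorem wordInv_wordInv_s12 {α : Type*} (l : List (α × Bool)) :
    wordInv (wordInv l) = l := by
  rw [wordInv_eq_invRev_s12, wordInv_eq_invRev_s12, FreeGroup.invRev_invRev]

theorem IsReducedWord.suffix {α : Type*} {l l' : List (α × Bool)}
    (h : IsReducedWord l) (hs : l' <:+ l) : IsReducedWord l' :=
  List.IsChain.suffix h hs

theorem IsReducedWord.prefix {α : Type*} {l l' : List (α × Bool)}
    (h : IsReducedWord l) (hs : l' <+: l) : IsReducedWord l' :=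
  List.IsChain.prefix h hs

/-- **Lemma 13 (induction4).** Let `m < n` and let `A, B, C ∈ 𝒲(E_n)` be reduced words
(possibly empty) with `ABA⁻CB⁻C⁻ ≠ e` such that `A` and `BA⁻CB⁻C⁻` are reduced words.
Then (4.1)–(4.3) hold. -/
theorem induction4 (G : GropeFrame) {m n : ℕ} (hmn : m < n)
    (A B C : List (GropeGen G n × Bool))
    (hAred : IsReducedWord A) (hBred : IsReducedWord B) (hCred : IsReducedWord C)
    (hne : FreeGroup.mk (A ++ B ++ wordInv A ++ C ++ wordInv B ++ wordInv C) ≠ 1)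
    (hred2 : IsReducedWord (B ++ wordInv A ++ C ++ wordInv B ++ wordInv C)) :
    -- (4.1)
    (∀ A₀, A = A₀ ++ wordInv B →
      IsReducedWord A₀ ∧
      IsReducedWord (B ++ wordInv A₀ ++ C ++ wordInv B ++ wordInv C) ∧
      FreeGroup.mk (A₀ ++ B ++ wordInv A₀ ++ C ++ wordInv B ++ wordInv C) =
        FreeGroup.mk (A ++ B ++ wordInv A ++ C ++ wordInv B ++ wordInv C) ∧
      (MemF G m (FreeGroup.mk (A₀ ++ B ++ wordInv A₀)) →
        MemF G m (FreeGroup.mk (C ++ wordInv B ++ wordInv C)) →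
        MemF G m (FreeGroup.mk (A ++ B ++ wordInv A)) ∧
        MemF G m (FreeGroup.mk (C ++ wordInv B ++ wordInv C)))) ∧
    -- (4.2)
    (∀ B₀, B = wordInv A ++ B₀ →
      IsReducedWord (B₀ ++ wordInv A ++ C ++ wordInv B₀ ++ A ++ wordInv C) ∧
      FreeGroup.mk (B₀ ++ wordInv A ++ C ++ wordInv B₀ ++ A ++ wordInv C) =
        FreeGroup.mk (A ++ B ++ wordInv A ++ C ++ wordInv B ++ wordInv C) ∧
      (MemF G m (FreeGroup.mk (B₀ ++ wordInv A)) →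
        MemF G m (FreeGroup.mk (C ++ wordInv B₀ ++ A ++ wordInv C)) →
        MemF G m (FreeGroup.mk (A ++ B ++ wordInv A)) ∧
        MemF G m (FreeGroup.mk (C ++ wordInv B ++ wordInv C)))) ∧
    -- (4.3)
    (∀ A₀ B₀ Z, A = A₀ ++ wordInv Z → B = Z ++ B₀ → A₀ ≠ [] → B₀ ≠ [] →
      IsReducedWord (A₀ ++ B₀) →
      IsReducedWord (A₀ ++ B₀ ++ Z ++ wordInv A₀ ++ C ++ wordInv B₀ ++ wordInv Z ++ wordInv C) ∧
      FreeGroup.mk (A₀ ++ B₀ ++ Z ++ wordInv A₀ ++ C ++ wordInv B₀ ++ wordInv Z ++ wordInv C) =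
        FreeGroup.mk (A ++ B ++ wordInv A ++ C ++ wordInv B ++ wordInv C) ∧
      (MemF G m (FreeGroup.mk (A₀ ++ B₀ ++ Z ++ wordInv A₀)) →
        MemF G m (FreeGroup.mk (C ++ wordInv B₀ ++ wordInv Z ++ wordInv C)) →
        MemF G m (FreeGroup.mk (A ++ B ++ wordInv A)) ∧
        MemF G m (FreeGroup.mk (C ++ wordInv B ++ wordInv C)))) := by
  refine ⟨?_, ?_, ?_⟩
  · -- (4.1)
    intro A₀ hA
    subst hA
    have hwA : wordInv (A₀ ++ wordInv B) = B ++ wordInv A₀ := by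
      rw [wordInv_append_s12, wordInv_wordInv_s12]
    have hred0 : IsReducedWord A₀ := hAred.prefix ⟨wordInv B, rfl⟩
    have hred1 :
        IsReducedWord (B ++ wordInv A₀ ++ C ++ wordInv B ++ wordInv C) := by
      rw [hwA] at hred2
      exact hred2.suffix ⟨B, by simp⟩
    have heq :
        FreeGroup.mk (A₀ ++ B ++ wordInv A₀ ++ C ++ wordInv B ++ wordInv C) =
          FreeGroup.mk ((A₀ ++ wordInv B) ++ B ++ wordInv (A₀ ++ wordInv B) ++ C ++
            wordInv B ++ wordInv C) := by
      simp only [wordInv_append_s12, wordInv_wordInv_s12, ← FreeGroup.mul_mk, mk_wordInv_s12]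
      group
    refine ⟨hred0, hred1, heq, ?_⟩
    intro h1 h2
    have heq2 :
        FreeGroup.mk ((A₀ ++ wordInv B) ++ B ++ wordInv (A₀ ++ wordInv B)) =
          FreeGroup.mk (A₀ ++ B ++ wordInv A₀) := by
      simp only [wordInv_append_s12, wordInv_wordInv_s12, ← FreeGroup.mul_mk, mk_wordInv_s12]
      group
    exact ⟨heq2 ▸ h1, h2⟩
  · -- (4.2)
    intro B₀ hB
    subst hB
    have hwB : wordInv (wordInv A ++ B₀) = wordInv B₀ ++ A := by
      rw [wordInv_append_s12, wordInv_wordInv_s12]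
    have hred1 :
        IsReducedWord (B₀ ++ wordInv A ++ C ++ wordInv B₀ ++ A ++ wordInv C) := by
      rw [hwB] at hred2
      exact hred2.suffix ⟨wordInv A, by simp⟩
    have heq :
        FreeGroup.mk (B₀ ++ wordInv A ++ C ++ wordInv B₀ ++ A ++ wordInv C) =
          FreeGroup.mk (A ++ (wordInv A ++ B₀) ++ wordInv A ++ C ++
            wordInv (wordInv A ++ B₀) ++ wordInv C) := by
      simp only [wordInv_append_s12, wordInv_wordInv_s12, ← FreeGroup.mul_mk, mk_wordInv_s12]
      group
    refine ⟨hred1, heq, ?_⟩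
    intro h1 h2
    constructor
    · have : FreeGroup.mk (A ++ (wordInv A ++ B₀) ++ wordInv A) =
          FreeGroup.mk (B₀ ++ wordInv A) := by
        simp only [wordInv_append_s12, wordInv_wordInv_s12, ← FreeGroup.mul_mk, mk_wordInv_s12]
        group
      exact this ▸ h1
    · have : FreeGroup.mk (C ++ wordInv (wordInv A ++ B₀) ++ wordInv C) =
          FreeGroup.mk (C ++ wordInv B₀ ++ A ++ wordInv C) := by
        simp only [wordInv_append_s12, wordInv_wordInv_s12, ← FreeGroup.mul_mk, mk_wordInv_s12]
        group
      exact this ▸ h2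
  · -- (4.3)
    intro A₀ B₀ Z hA hB hA₀ hB₀ hAB
    subst hA; subst hB
    have hwA : wordInv (A₀ ++ wordInv Z) = Z ++ wordInv A₀ := by
      rw [wordInv_append_s12, wordInv_wordInv_s12]
    have hwB : wordInv (Z ++ B₀) = wordInv B₀ ++ wordInv Z := by
      rw [wordInv_append_s12]
    have hredS :
        IsReducedWord (B₀ ++ Z ++ wordInv A₀ ++ C ++ wordInv B₀ ++ wordInv Z ++
          wordInv C) := by
      rw [hwA, hwB] at hred2
      refine hred2.suffix ⟨Z, by simp⟩
    have hredA₀ : IsReducedWord A₀ := hAred.prefix ⟨wordInv Z, rfl⟩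
    have hjunc : ∀ x ∈ A₀.getLast?, ∀ y ∈ B₀.head?,
        ¬(x.1 = y.1 ∧ y.2 = !x.2) := (List.isChain_append.mp hAB).2.2
    have hred1 :
        IsReducedWord (A₀ ++ B₀ ++ Z ++ wordInv A₀ ++ C ++ wordInv B₀ ++
          wordInv Z ++ wordInv C) := by
      have hrw : A₀ ++ B₀ ++ Z ++ wordInv A₀ ++ C ++ wordInv B₀ ++
          wordInv Z ++ wordInv C =
          A₀ ++ (B₀ ++ Z ++ wordInv A₀ ++ C ++ wordInv B₀ ++ wordInv Z ++
            wordInv C) := by simp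
      rw [hrw]
      refine List.isChain_append.mpr ⟨hredA₀, hredS, ?_⟩
      intro x hx y hy
      refine hjunc x hx y ?_
      obtain ⟨b, hb⟩ := List.exists_mem_of_ne_nil B₀ hB₀
      have hBne : B₀ ≠ [] := hB₀
      rw [show B₀ ++ Z ++ wordInv A₀ ++ C ++ wordInv B₀ ++ wordInv Z ++ wordInv C =
        B₀ ++ (Z ++ wordInv A₀ ++ C ++ wordInv B₀ ++ wordInv Z ++ wordInv C) by simp,
        List.head?_append] at hy
      cases hh : B₀.head? with
      | none => exact absurd (List.head?_eq_none_iff.mp hh) hBne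
      | some c =>
          rw [hh] at hy
          simp only [Option.some_or, Option.mem_def, Option.some.injEq] at hy
          subst hy
          simp [hh]
    have heq :
        FreeGroup.mk (A₀ ++ B₀ ++ Z ++ wordInv A₀ ++ C ++ wordInv B₀ ++
          wordInv Z ++ wordInv C) =
          FreeGroup.mk ((A₀ ++ wordInv Z) ++ (Z ++ B₀) ++ wordInv (A₀ ++ wordInv Z) ++
            C ++ wordInv (Z ++ B₀) ++ wordInv C) := by
      simp only [wordInv_append_s12, wordInv_wordInv_s12, ← FreeGroup.mul_mk, mk_wordInv_s12]
      group
    refine ⟨hred1, heq, ?_⟩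
    intro h1 h2
    constructor
    · have : FreeGroup.mk ((A₀ ++ wordInv Z) ++ (Z ++ B₀) ++ wordInv (A₀ ++ wordInv Z)) =
          FreeGroup.mk (A₀ ++ B₀ ++ Z ++ wordInv A₀) := by
        simp only [wordInv_append_s12, wordInv_wordInv_s12, ← FreeGroup.mul_mk, mk_wordInv_s12]
        group
      exact this ▸ h1
    · have : FreeGroup.mk (C ++ wordInv (Z ++ B₀) ++ wordInv C) =
          FreeGroup.mk (C ++ wordInv B₀ ++ wordInv Z ++ wordInv C) := by
        simp only [wordInv_append_s12, wordInv_wordInv_s12, ← FreeGroup.mul_mk, mk_wordInv_s12]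
        group
      exact this ▸ h2
end
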